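/- Let J : ℝ³ → ℝ^{3×3} be given by J(x) = [[x₂, x₁, −1], [−x₂, −x₁, −1], [0, 0, −1]] (the Jacobian of the active constraints g₁ = x₁x₂ − x₃, g₂ = −x₁x₂ − x₃, g₃ = −x₃ at x* = (0,0,0)). Then there do NOT exist functions x ↦ U(x) ∈ ℝ^{3×3}, x ↦ Σ(x) ∈ ℝ^{3×3}, x ↦ V(x) ∈ ℝ^{3×3}, differentiable in a neighborhood of x* = 0, such that J(x) = U(x)Σ(x)V(x)ᵀ for all x in that neighborhood, Σ(x) is diagonal with diagonal entries σ₁(x), σ₂(x), σ₃(x) satisfying σ_i(x) = 0 whenever i exceeds the rank of J(x), and the columns of U(0) and the columns of V(0) are non-zero and pairwise orthogonal. (Note: rank J(0) = 1 and rank J(x) ≤ 2 for all x.) -/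

import Mathlib

open scoped BigOperators
open Matrix

noncomputable section

/-- The Jacobian of the active constraints `g₁ = x₁x₂ − x₃`, `g₂ = −x₁x₂ − x₃`,
`g₃ = −x₃` at the point `x`. -/
def J17 : (Fin 3 → ℝ) → Matrix (Fin 3) (Fin 3) ℝ :=
  fun x => !![x 1, x 0, -1; -(x 1), -(x 0), -1; 0, 0, -1]

lemma J17_rank_le_two (x : Fin 3 → ℝ) : (J17 x).rank ≤ 2 := by
  have h : J17 x = (!![(1:ℝ), -1; -1, -1; 0, -1]) * !![x 1, x 0, 0; 0, 0, 1] := by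
    ext i j
    fin_cases i <;> fin_cases j <;>
      simp [J17, Matrix.mul_apply, Fin.sum_univ_two, Matrix.vecHead, Matrix.vecTail]
  rw [h]
  exact le_trans (Matrix.rank_mul_le_left _ _) (le_of_le_of_eq (Matrix.rank_le_card_width _) (Fintype.card_fin _))

lemma J17_rank_zero : (J17 0).rank ≤ 1 := by
  have h : J17 (0 : Fin 3 → ℝ) = (!![(-1:ℝ); -1; -1]) * !![(0:ℝ), 0, 1] := by
    ext i j
    fin_cases i <;> fin_cases j <;>
      simp [J17, Matrix.mul_apply, Matrix.vecHead, Matrix.vecTail]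
  rw [h]
  exact le_trans (Matrix.rank_mul_le_left _ _) (le_of_le_of_eq (Matrix.rank_le_card_width _) (Fintype.card_fin _))


/-- the matrix function `J17` admits no smooth singular value decomposition
around the origin in the sense of Assumption 1 of the paper. -/
theorem stmt17 :
    ¬ ∃ (O : Set (Fin 3 → ℝ)) (U S V : (Fin 3 → ℝ) → Matrix (Fin 3) (Fin 3) ℝ),
      O ∈ nhds (0 : Fin 3 → ℝ) ∧
      (∀ i j : Fin 3, DifferentiableOn ℝ (fun x => U x i j) O) ∧
      (∀ i j : Fin 3, DifferentiableOn ℝ (fun x => S x i j) O) ∧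
      (∀ i j : Fin 3, DifferentiableOn ℝ (fun x => V x i j) O) ∧
      (∀ x ∈ O, J17 x = U x * S x * (V x)ᵀ) ∧
      (∀ x ∈ O, ∀ i j : Fin 3, i ≠ j → S x i j = 0) ∧
      (∀ x ∈ O, ∀ i : Fin 3, (J17 x).rank ≤ (i : ℕ) → S x i i = 0) ∧
      (∀ a : Fin 3, (fun i => U 0 i a) ≠ 0) ∧
      (∀ a b : Fin 3, a ≠ b → ∑ i, U 0 i a * U 0 i b = 0) ∧
      (∀ a : Fin 3, (fun k => V 0 k a) ≠ 0) ∧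
      (∀ a b : Fin 3, a ≠ b → ∑ k, V 0 k a * V 0 k b = 0) := by
  rintro ⟨O, U, S, V, hO, hU, hS, hV, hprod, hdiag, hrank, -, -, -, -⟩
  have h0O : (0 : Fin 3 → ℝ) ∈ O := mem_of_mem_nhds hO
  have hS2 : ∀ x ∈ O, S x 2 2 = 0 := fun x hx => hrank x hx 2 (by simpa using J17_rank_le_two x)
  have hS1 : S 0 1 1 = 0 := hrank 0 h0O 1 (by simpa using J17_rank_zero)
  -- entrywise formula
  have key : ∀ x ∈ O, ∀ i j : Fin 3,
      J17 x i j = U x i 0 * S x 0 0 * V x j 0 + U x i 1 * S x 1 1 * V x j 1 := by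
    intro x hx i j
    have h := congrFun (congrFun (hprod x hx) i) j
    rw [h]
    simp only [Matrix.mul_apply, Matrix.transpose_apply, Fin.sum_univ_three]
    rw [hdiag x hx 1 0 (by decide), hdiag x hx 2 0 (by decide), hdiag x hx 0 1 (by decide),
       hdiag x hx 2 1 (by decide), hdiag x hx 0 2 (by decide), hdiag x hx 1 2 (by decide),
       hS2 x hx]
    ring
  -- values at 0
  have k02 : (-1 : ℝ) = U 0 0 0 * S 0 0 0 * V 0 2 0 + U 0 0 1 * S 0 1 1 * V 0 2 1 :=
    key 0 h0O 0 2
  have k12 : (-1 : ℝ) = U 0 1 0 * S 0 0 0 * V 0 2 0 + U 0 1 1 * S 0 1 1 * V 0 2 1 :=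
    key 0 h0O 1 2
  have k00 : (0 : Fin 3 → ℝ) 1 = U 0 0 0 * S 0 0 0 * V 0 0 0 + U 0 0 1 * S 0 1 1 * V 0 0 1 :=
    key 0 h0O 0 0
  have k01 : (0 : Fin 3 → ℝ) 0 = U 0 0 0 * S 0 0 0 * V 0 1 0 + U 0 0 1 * S 0 1 1 * V 0 1 1 :=
    key 0 h0O 0 1
  rw [hS1] at k02 k12 k00 k01
  simp only [Pi.zero_apply, mul_zero, zero_mul, add_zero] at k02 k12 k00 k01
  -- k02 : -1 = U 0 0 0 * S 0 0 0 * V 0 2 0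
  have hcne : V 0 2 0 ≠ 0 := by
    intro h; rw [h, mul_zero] at k02; norm_num at k02
  have hPne : U 0 0 0 * S 0 0 0 ≠ 0 := by
    intro h; rw [h, zero_mul] at k02; norm_num at k02
  have hV00 : V 0 0 0 = 0 := by
    rcases mul_eq_zero.mp k00.symm with h | h
    · exact absurd h hPne
    · exact h
  have hV10 : V 0 1 0 = 0 := by
    rcases mul_eq_zero.mp k01.symm with h | h
    · exact absurd h hPne
    · exact h
  have hQ0 : (U 0 0 0 - U 0 1 0) * S 0 0 0 = 0 := by
    have h : ((U 0 0 0 - U 0 1 0) * S 0 0 0) * V 0 2 0 = 0 := by linear_combination k12 - k02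
    rcases mul_eq_zero.mp h with h' | h'
    · exact h'
    · exact absurd h' hcne
  -- the two scalar functions
  set q0 : (Fin 3 → ℝ) → ℝ := fun x => (U x 0 0 - U x 1 0) * S x 0 0 with hq0def
  set q1 : (Fin 3 → ℝ) → ℝ := fun x => (U x 0 1 - U x 1 1) * S x 1 1 with hq1def
  have hq0z : q0 0 = 0 := hQ0
  have hq1z : q1 0 = 0 := by simp only [hq1def, hS1, mul_zero]
  have hEq1 : ∀ x ∈ O, q0 x * V x 0 0 + q1 x * V x 0 1 = 2 * x 1 := by
    intro x hx
    have a : x 1 = U x 0 0 * S x 0 0 * V x 0 0 + U x 0 1 * S x 1 1 * V x 0 1 := key x hx 0 0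
    have b : -(x 1) = U x 1 0 * S x 0 0 * V x 0 0 + U x 1 1 * S x 1 1 * V x 0 1 := key x hx 1 0
    simp only [hq0def, hq1def]
    linear_combination b - a
  have hEq2 : ∀ x ∈ O, q0 x * V x 1 0 + q1 x * V x 1 1 = 2 * x 0 := by
    intro x hx
    have a : x 0 = U x 0 0 * S x 0 0 * V x 1 0 + U x 0 1 * S x 1 1 * V x 1 1 := key x hx 0 1
    have b : -(x 0) = U x 1 0 * S x 0 0 * V x 1 0 + U x 1 1 * S x 1 1 * V x 1 1 := key x hx 1 1
    simp only [hq0def, hq1def]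
    linear_combination b - a
  -- differentiability at 0
  have dU : ∀ i j : Fin 3, DifferentiableAt ℝ (fun x => U x i j) 0 :=
    fun i j => (hU i j).differentiableAt hO
  have dS : ∀ i j : Fin 3, DifferentiableAt ℝ (fun x => S x i j) 0 :=
    fun i j => (hS i j).differentiableAt hO
  have dV : ∀ i j : Fin 3, DifferentiableAt ℝ (fun x => V x i j) 0 :=
    fun i j => (hV i j).differentiableAt hO
  have dq0 : DifferentiableAt ℝ q0 0 := ((dU 0 0).sub (dU 1 0)).mul (dS 0 0)
  have dq1 : DifferentiableAt ℝ q1 0 := ((dU 0 1).sub (dU 1 1)).mul (dS 1 1)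
  set L := fderiv ℝ q1 0 with hL
  -- derivative of the two equations
  have main : ∀ (j m : Fin 3),
      (∀ x ∈ O, q0 x * V x j 0 + q1 x * V x j 1 = 2 * x m) →
      V 0 j 0 = 0 → (∀ d : Fin 3 → ℝ, 2 * d m = V 0 j 1 * L d) := by
    intro j m hEq hVj0 d
    have hmul1 : HasFDerivAt (fun x => q0 x * V x j 0)
        (q0 0 • fderiv ℝ (fun x => V x j 0) 0 + V 0 j 0 • fderiv ℝ q0 0) 0 :=
      dq0.hasFDerivAt.mul (dV j 0).hasFDerivAt
    have hmul2 : HasFDerivAt (fun x => q1 x * V x j 1)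
        (q1 0 • fderiv ℝ (fun x => V x j 1) 0 + V 0 j 1 • L) 0 :=
      dq1.hasFDerivAt.mul (dV j 1).hasFDerivAt
    have hsum := hmul1.add hmul2
    have heq : (fun x => q0 x * V x j 0 + q1 x * V x j 1)
        =ᶠ[nhds (0 : Fin 3 → ℝ)] (fun x => 2 * x m) :=
      Filter.eventuallyEq_of_mem hO (fun x hx => hEq x hx)
    have hproj : HasFDerivAt (fun x : Fin 3 → ℝ => 2 * x m)
        ((2:ℝ) • (ContinuousLinearMap.proj m : (Fin 3 → ℝ) →L[ℝ] ℝ)) 0 :=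
      by simpa using ((ContinuousLinearMap.proj (R := ℝ) (φ := fun _ : Fin 3 => ℝ) m).hasFDerivAt.const_mul (2:ℝ))
    have H := hsum.congr_of_eventuallyEq heq.symm
    have huniq := H.unique hproj
    have happ := DFunLike.congr_fun huniq d
    simp only [ContinuousLinearMap.add_apply, ContinuousLinearMap.smul_apply,
      ContinuousLinearMap.proj_apply, smul_eq_mul, hq0z, hq1z, hVj0, zero_mul, add_zero,
      zero_add] at happ
    linarith [happ]
  have e1 := main 0 1 hEq1 hV00
  have e2 := main 1 0 hEq2 hV10
  -- plug in basis directions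
  have A1 := e1 (Pi.single 0 1)
  have A2 := e2 (Pi.single 0 1)
  have A3 := e1 (Pi.single 1 1)
  have A4 := e2 (Pi.single 1 1)
  rw [Pi.single_eq_of_ne (by decide : (1:Fin 3) ≠ 0), mul_zero] at A1
  rw [Pi.single_eq_same] at A2 A3
  rw [Pi.single_eq_of_ne (by decide : (0:Fin 3) ≠ 1), mul_zero] at A4
  have hcontr : (2 : ℝ) * 1 * (2 * 1) = 0 := by
    calc (2:ℝ) * 1 * (2 * 1) = (V 0 1 1 * L (Pi.single 0 1)) * (V 0 0 1 * L (Pi.single 1 1)) := by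
          rw [← A2, ← A3]
      _ = (V 0 0 1 * L (Pi.single 0 1)) * (V 0 1 1 * L (Pi.single 1 1)) := by ring
      _ = 0 * 0 := by rw [← A1, ← A4]
      _ = 0 := by ring
  norm_num at hcontr
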